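/- Let q > 1 and x > 0, with unbounded digits allowed. Denote by (a_i) and (b_i) the quasi-greedy and greedy expansions of x in base q, and by (α_i) the quasi-greedy expansion of 1. If (b_i) has a last nonzero element b_m (i.e., b_m ≥ 1 and b_i = 0 for all i > m), then (a_i) = b_1 ... b_{m−1} (b_m − 1) α_1 α_2 ..., i.e., a_i = b_i for i < m, a_m = b_m − 1, and a_{m+i} = α_i for all i ≥ 1. Otherwise (if (b_i) has infinitely many nonzero terms) we have (a_i) = (b_i). -/
import Mathlib


/-- The next quasi-greedy digit with unbounded digits: the largest nonnegative integer `m`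
with `s + m / q ^ (n+1) < x`, where `s` is the value of the previously chosen digits. -/
noncomputable def qgDigitU (q x s : ℝ) (n : ℕ) : ℕ :=
  sSup {m : ℕ | s + (m : ℝ) / q ^ (n + 1) < x}

/-- Partial sums of the quasi-greedy expansion of `x` in base `q` with unbounded digits. -/
noncomputable def qgSumU (q x : ℝ) : ℕ → ℝ
  | 0 => 0
  | n + 1 => qgSumU q x n + (qgDigitU q x (qgSumU q x n) n : ℝ) / q ^ (n + 1)

/-- `quasiGreedyU q x n` is the `(n+1)`-st digit (indexing from 0) of the quasi-greedy
expansion of `x` in base `q` with unbounded digits: recursively, it is the largest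
nonnegative integer `a_n` with `a_1/q + ⋯ + a_n/q^n < x`. -/
noncomputable def quasiGreedyU (q x : ℝ) (n : ℕ) : ℕ :=
  qgDigitU q x (qgSumU q x n) n

/-- The next greedy digit with unbounded digits: the largest nonnegative integer `m`
with `s + m / q ^ (n+1) ≤ x`, where `s` is the value of the previously chosen digits. -/
noncomputable def gDigitU (q x s : ℝ) (n : ℕ) : ℕ :=
  sSup {m : ℕ | s + (m : ℝ) / q ^ (n + 1) ≤ x}

/-- Partial sums of the greedy expansion of `x` in base `q` with unbounded digits. -/
noncomputable def gSumU (q x : ℝ) : ℕ → ℝ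
  | 0 => 0
  | n + 1 => gSumU q x n + (gDigitU q x (gSumU q x n) n : ℝ) / q ^ (n + 1)

/-- `greedyU q x n` is the `(n+1)`-st digit (indexing from 0) of the greedy expansion
of `x` in base `q` with unbounded digits: recursively, it is the largest nonnegative
integer `b_n` with `b_1/q + ⋯ + b_n/q^n ≤ x`. -/
noncomputable def greedyU (q x : ℝ) (n : ℕ) : ℕ :=
  gDigitU q x (gSumU q x n) n

namespace QGU

variable {q x : ℝ}

lemma powPos (hq : 1 < q) (n : ℕ) : (0:ℝ) < q ^ n := pow_pos (by linarith) n

lemma bddG (hq : 1 < q) (x s : ℝ) (n : ℕ) :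
    BddAbove {m : ℕ | s + (m : ℝ) / q ^ (n + 1) ≤ x} := by
  refine ⟨⌈(x - s) * q ^ (n + 1)⌉₊, fun m hm => ?_⟩
  have hp := powPos hq (n + 1)
  simp only [Set.mem_setOf_eq] at hm
  have h1 : (m : ℝ) / q ^ (n + 1) ≤ x - s := by linarith
  have h2 : (m : ℝ) ≤ (x - s) * q ^ (n + 1) := by rwa [div_le_iff₀ hp] at h1
  have h3 : (m : ℝ) ≤ (⌈(x - s) * q ^ (n + 1)⌉₊ : ℝ) := h2.trans (Nat.le_ceil _)
  exact_mod_cast h3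

lemma bddQ (hq : 1 < q) (x s : ℝ) (n : ℕ) :
    BddAbove {m : ℕ | s + (m : ℝ) / q ^ (n + 1) < x} :=
  BddAbove.mono
    (show {m : ℕ | s + (m : ℝ) / q ^ (n + 1) < x}
        ⊆ {m : ℕ | s + (m : ℝ) / q ^ (n + 1) ≤ x} from
        fun m hm => Set.mem_setOf.mpr (le_of_lt (Set.mem_setOf.mp hm)))
    (bddG hq x s n)

lemma gDigit_spec (hq : 1 < q) {s : ℝ} (n : ℕ) (hs : s ≤ x) :
    s + (gDigitU q x s n : ℝ) / q ^ (n + 1) ≤ x ∧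
      x < s + ((gDigitU q x s n : ℝ) + 1) / q ^ (n + 1) := by
  have hp := powPos hq (n + 1)
  have hne : {m : ℕ | s + (m : ℝ) / q ^ (n + 1) ≤ x}.Nonempty :=
    ⟨0, by simpa using hs⟩
  have hbdd := bddG hq x s n
  have hmem := Nat.sSup_mem hne hbdd
  refine ⟨hmem, ?_⟩
  by_contra h
  push_neg at h
  have hmem2 : gDigitU q x s n + 1 ∈ {m : ℕ | s + (m : ℝ) / q ^ (n + 1) ≤ x} := by
    simp only [Set.mem_setOf_eq]
    push_cast
    exact h
  have := le_csSup hbdd hmem2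
  simp only [gDigitU] at this
  omega

lemma qgDigit_spec (hq : 1 < q) {s : ℝ} (n : ℕ) (hs : s < x) :
    s + (qgDigitU q x s n : ℝ) / q ^ (n + 1) < x ∧
      x ≤ s + ((qgDigitU q x s n : ℝ) + 1) / q ^ (n + 1) := by
  have hp := powPos hq (n + 1)
  have hne : {m : ℕ | s + (m : ℝ) / q ^ (n + 1) < x}.Nonempty :=
    ⟨0, by simpa using hs⟩
  have hbdd := bddQ hq x s n
  have hmem := Nat.sSup_mem hne hbdd
  refine ⟨hmem, ?_⟩
  by_contra h
  push_neg at h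
  have hmem2 : qgDigitU q x s n + 1 ∈ {m : ℕ | s + (m : ℝ) / q ^ (n + 1) < x} := by
    simp only [Set.mem_setOf_eq]
    push_cast
    exact h
  have := le_csSup hbdd hmem2
  simp only [qgDigitU] at this
  omega

lemma gSumU_succ (q x : ℝ) (n : ℕ) :
    gSumU q x (n + 1) = gSumU q x n + (greedyU q x n : ℝ) / q ^ (n + 1) := rfl

lemma qgSumU_succ (q x : ℝ) (n : ℕ) :
    qgSumU q x (n + 1) = qgSumU q x n + (quasiGreedyU q x n : ℝ) / q ^ (n + 1) := rfl

lemma gSum_le (hq : 1 < q) (hx : 0 ≤ x) : ∀ n, gSumU q x n ≤ x := by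
  intro n
  induction n with
  | zero => simpa [gSumU] using hx
  | succ n ih => exact (gDigit_spec hq n ih).1

lemma gSum_lt_add (hq : 1 < q) (hx : 0 ≤ x) (n : ℕ) :
    x < gSumU q x (n + 1) + 1 / q ^ (n + 1) := by
  have h := (gDigit_spec hq (x := x) n (gSum_le hq hx n)).2
  rw [gSumU_succ]
  have e : (greedyU q x n : ℝ) = (gDigitU q x (gSumU q x n) n : ℝ) := rfl
  rw [e]
  have hsplit : ((gDigitU q x (gSumU q x n) n : ℝ) + 1) / q ^ (n + 1)
      = (gDigitU q x (gSumU q x n) n : ℝ) / q ^ (n + 1) + 1 / q ^ (n + 1) := by ring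
  linarith

lemma qgSum_lt (hq : 1 < q) (hx : 0 < x) : ∀ n, qgSumU q x n < x := by
  intro n
  induction n with
  | zero => simpa [qgSumU] using hx
  | succ n ih => exact (qgDigit_spec hq n ih).1

lemma gSum_mono (hq : 1 < q) (hx : 0 ≤ x) : Monotone (gSumU q x) := by
  apply monotone_nat_of_le_succ
  intro n
  rw [gSumU_succ]
  have hp := powPos hq (n + 1)
  have : (0:ℝ) ≤ (greedyU q x n : ℝ) / q ^ (n + 1) :=
    div_nonneg (Nat.cast_nonneg _) hp.le
  linarith

/-- if the sums agree at `n` and the greedy sum at `n+1` is still `< x`, the digits agree. -/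
lemma step_eq (hq : 1 < q) (hx : 0 < x) {n : ℕ}
    (heq : qgSumU q x n = gSumU q x n) (hlt : gSumU q x (n + 1) < x) :
    quasiGreedyU q x n = greedyU q x n ∧ qgSumU q x (n + 1) = gSumU q x (n + 1) := by
  have hsx : gSumU q x n < x := heq ▸ qgSum_lt hq hx n
  have hdig : quasiGreedyU q x n = greedyU q x n := by
    have hsub : {m : ℕ | gSumU q x n + (m : ℝ) / q ^ (n + 1) < x}
        ⊆ {m : ℕ | gSumU q x n + (m : ℝ) / q ^ (n + 1) ≤ x} :=
        fun m hm => Set.mem_setOf.mpr (le_of_lt (Set.mem_setOf.mp hm))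
    have h1 : quasiGreedyU q x n ≤ greedyU q x n := by
      have hne : {m : ℕ | gSumU q x n + (m : ℝ) / q ^ (n + 1) < x}.Nonempty :=
        ⟨0, by simpa using hsx⟩
      have hmem := Nat.sSup_mem hne (bddQ hq x _ n)
      have := le_csSup (bddG hq x (gSumU q x n) n) (hsub hmem)
      simpa [quasiGreedyU, qgDigitU, greedyU, gDigitU, heq] using this
    have h2 : greedyU q x n ≤ quasiGreedyU q x n := by
      have hmem : greedyU q x n ∈ {m : ℕ | gSumU q x n + (m : ℝ) / q ^ (n + 1) < x} := by
        simp only [Set.mem_setOf_eq]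
        rw [← gSumU_succ]
        exact hlt
      have := le_csSup (bddQ hq x (gSumU q x n) n) hmem
      simpa [quasiGreedyU, qgDigitU, heq] using this
    omega
  refine ⟨hdig, ?_⟩
  rw [qgSumU_succ, gSumU_succ, heq, hdig]

lemma gSum_eq_of_eq (hq : 1 < q) {n : ℕ} (h : gSumU q x n = x) :
    ∀ k, gSumU q x (n + k) = x ∧ greedyU q x (n + k) = 0 := by
  intro k
  induction k with
  | zero =>
    refine ⟨h, ?_⟩
    have hp := powPos hq (n + 1)
    have hle : greedyU q x n ≤ 0 := by
      apply csSup_le ⟨0, by simp [h]⟩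
      intro m hm
      simp only [Set.mem_setOf_eq, h] at hm
      have h1 : (m : ℝ) / q ^ (n + 1) ≤ 0 := by linarith
      have hm0 : (m : ℝ) ≤ 0 := by
        rw [div_le_iff₀ hp] at h1
        simpa using h1
      exact_mod_cast hm0
    show greedyU q x n = 0
    omega
  | succ k ih =>
    have hsum : gSumU q x (n + k + 1) = x := by
      rw [gSumU_succ, ih.1, ih.2]
      simp
    have hp := powPos hq (n + k + 1 + 1)
    have hdig : greedyU q x (n + k + 1) = 0 := by
      have : greedyU q x (n + k + 1) ≤ 0 := by
        apply csSup_le ⟨0, by simp [hsum]⟩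
        intro m hm
        simp only [Set.mem_setOf_eq, hsum] at hm
        have h1 : (m : ℝ) / q ^ (n + k + 1 + 1) ≤ 0 := by linarith
        rw [div_le_iff₀ hp] at h1
        have : (m : ℝ) ≤ 0 := by simpa using h1
        exact_mod_cast this
      omega
    exact ⟨by rw [show n + (k+1) = (n + k) + 1 from rfl, hsum], by
      rw [show n + (k+1) = (n + k) + 1 from rfl]; exact hdig⟩

lemma gSum_eq_x (hq : 1 < q) (hx : 0 < x) {m : ℕ}
    (h0 : ∀ i, m < i → greedyU q x i = 0) : gSumU q x (m + 1) = x := by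
  have hconst : ∀ k, gSumU q x (m + 1 + k) = gSumU q x (m + 1) := by
    intro k
    induction k with
    | zero => rfl
    | succ k ih =>
      rw [show m + 1 + (k + 1) = (m + 1 + k) + 1 from rfl, gSumU_succ, ih,
        h0 (m + 1 + k) (by omega)]
      simp
  refine le_antisymm (gSum_le hq hx.le (m + 1)) ?_
  by_contra h
  push_neg at h
  obtain ⟨k, hk⟩ := pow_unbounded_of_one_lt (1 / (x - gSumU q x (m + 1))) hq
  have hε : 0 < x - gSumU q x (m + 1) := by linarith
  have hp := powPos hq k
  have hp2 := powPos hq (m + 1 + k + 1)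
  have hle : q ^ k ≤ q ^ (m + 1 + k + 1) := pow_le_pow_right₀ (by linarith) (by omega)
  have h1 : 1 / q ^ (m + 1 + k + 1) < x - gSumU q x (m + 1) := by
    rw [div_lt_iff₀ hp2]
    rw [div_lt_iff₀ hε] at hk
    nlinarith
  have h2 := gSum_lt_add hq hx.le (m + 1 + k)
  rw [show m + 1 + k + 1 = m + 1 + (k + 1) from rfl, hconst (k + 1)] at h2
  rw [show m + 1 + (k+1) = m + 1 + k + 1 from rfl] at h2
  linarith

lemma digit_shift (hq : 1 < q) {m i : ℕ}
    (hs : qgSumU q x (m + 1 + i) = x - 1 / q ^ (m + 1) + qgSumU q 1 i / q ^ (m + 1)) :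
    quasiGreedyU q x (m + 1 + i) = quasiGreedyU q 1 i := by
  have hP := powPos hq (m + 1)
  have hQ := powPos hq (i + 1)
  unfold quasiGreedyU qgDigitU
  congr 1
  ext k
  simp only [Set.mem_setOf_eq, hs]
  have epow : q ^ (m + 1 + i + 1) = q ^ (m + 1) * q ^ (i + 1) := by
    rw [← pow_add]
    ring_nf
  rw [epow]
  set t := qgSumU q 1 i
  have e1 : x - 1 / q ^ (m + 1) + t / q ^ (m + 1) + (k : ℝ) / (q ^ (m + 1) * q ^ (i + 1)) - x
      = (t + (k : ℝ) / q ^ (i + 1) - 1) / q ^ (m + 1) := by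
    field_simp
    ring
  constructor <;> intro h
  · have h2 : (t + (k : ℝ) / q ^ (i + 1) - 1) / q ^ (m + 1) < 0 := by rw [← e1]; linarith
    rw [div_lt_iff₀ hP, zero_mul] at h2
    linarith
  · have h2 : (t + (k : ℝ) / q ^ (i + 1) - 1) / q ^ (m + 1) < 0 := by
      rw [div_lt_iff₀ hP, zero_mul]; linarith
    rw [← e1] at h2
    linarith

lemma tail (hq : 1 < q) {m : ℕ}
    (h : qgSumU q x (m + 1) = x - 1 / q ^ (m + 1)) :
    ∀ i, qgSumU q x (m + 1 + i) = x - 1 / q ^ (m + 1) + qgSumU q 1 i / q ^ (m + 1) ∧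
      quasiGreedyU q x (m + 1 + i) = quasiGreedyU q 1 i := by
  have hP := powPos hq (m + 1)
  have hP' : q ^ (m + 1) ≠ 0 := hP.ne'
  intro i
  induction i with
  | zero =>
    have hs : qgSumU q x (m + 1 + 0) = x - 1 / q ^ (m + 1) + qgSumU q 1 0 / q ^ (m + 1) := by
      simpa [qgSumU] using h
    exact ⟨hs, digit_shift hq hs⟩
  | succ i ih =>
    have hQ := powPos hq (i + 1)
    have hs : qgSumU q x (m + 1 + (i + 1))
        = x - 1 / q ^ (m + 1) + qgSumU q 1 (i + 1) / q ^ (m + 1) := by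
      have epow : q ^ (m + 1 + i + 1) = q ^ (m + 1) * q ^ (i + 1) := by
        rw [← pow_add]
        ring_nf
      rw [show m + 1 + (i + 1) = (m + 1 + i) + 1 from rfl, qgSumU_succ, ih.1, ih.2,
        qgSumU_succ, epow]
      field_simp
      ring
    exact ⟨hs, digit_shift hq hs⟩

end QGU

/-- Proposition 3.7 (a): with unbounded digits, if the greedy expansion `(b_i)` of `x` has
a last nonzero element `b_m`, then the quasi-greedy expansion of `x` is
`b_1 … b_{m-1} (b_m - 1) α_1 α_2 …`, where `(α_i)` is the quasi-greedy expansion of `1`;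
otherwise the two expansions coincide. -/
theorem quasiGreedyU_eq_of_greedyU (q x : ℝ) (hq : 1 < q) (hx : 0 < x) :
    (∀ m : ℕ, 1 ≤ greedyU q x m → (∀ i, m < i → greedyU q x i = 0) →
      ((∀ i, i < m → quasiGreedyU q x i = greedyU q x i) ∧
        quasiGreedyU q x m = greedyU q x m - 1 ∧
        ∀ i, quasiGreedyU q x (m + 1 + i) = quasiGreedyU q 1 i)) ∧
    ({n | greedyU q x n ≠ 0}.Infinite → quasiGreedyU q x = greedyU q x) := by
  constructor
  · intro m hbm h0
    have hp := QGU.powPos hq (m + 1)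
    have hxsum : gSumU q x (m + 1) = x := QGU.gSum_eq_x hq hx h0
    have hbx : gSumU q x m + (greedyU q x m : ℝ) / q ^ (m + 1) = x := by
      rw [← QGU.gSumU_succ]; exact hxsum
    have hb1 : (1 : ℝ) ≤ (greedyU q x m : ℝ) := by exact_mod_cast hbm
    have hdivpos : 1 / q ^ (m + 1) ≤ (greedyU q x m : ℝ) / q ^ (m + 1) := by gcongr
    have h1p : (0:ℝ) < 1 / q ^ (m + 1) := by positivity
    have hgm_lt : gSumU q x m < x := by linarith
    have H : ∀ i, i ≤ m → qgSumU q x i = gSumU q x i := by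
      intro i hi
      induction i with
      | zero => rfl
      | succ i ih =>
        have hlt : gSumU q x (i + 1) < x :=
          lt_of_le_of_lt (QGU.gSum_mono hq hx.le (show i + 1 ≤ m by omega)) hgm_lt
        exact (QGU.step_eq hq hx (ih (by omega)) hlt).2
    have hdigits : ∀ i, i < m → quasiGreedyU q x i = greedyU q x i := by
      intro i hi
      have hlt : gSumU q x (i + 1) < x :=
        lt_of_le_of_lt (QGU.gSum_mono hq hx.le (show i + 1 ≤ m by omega)) hgm_lt
      exact (QGU.step_eq hq hx (H i (by omega)) hlt).1
    have hsm : qgSumU q x m = gSumU q x m := H m le_rfl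
    have hqm : quasiGreedyU q x m = greedyU q x m - 1 := by
      unfold quasiGreedyU qgDigitU
      rw [hsm]
      apply le_antisymm
      · apply csSup_le
        · refine ⟨greedyU q x m - 1, ?_⟩
          simp only [Set.mem_setOf_eq]
          have hc : ((greedyU q x m - 1 : ℕ) : ℝ) = (greedyU q x m : ℝ) - 1 := by
            push_cast [hbm]; ring
          rw [hc]
          have : ((greedyU q x m : ℝ) - 1) / q ^ (m + 1)
              = (greedyU q x m : ℝ) / q ^ (m + 1) - 1 / q ^ (m + 1) := by ring
          rw [this]
          linarith
        · intro k hk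
          simp only [Set.mem_setOf_eq] at hk
          have : (k : ℝ) / q ^ (m + 1) < (greedyU q x m : ℝ) / q ^ (m + 1) := by linarith
          have hkb : (k : ℝ) < (greedyU q x m : ℝ) := by
            rwa [div_lt_div_iff_of_pos_right hp] at this
          have : k < greedyU q x m := by exact_mod_cast hkb
          omega
      · apply le_csSup (QGU.bddQ hq x _ m)
        simp only [Set.mem_setOf_eq]
        have hc : ((greedyU q x m - 1 : ℕ) : ℝ) = (greedyU q x m : ℝ) - 1 := by
          push_cast [hbm]; ring
        rw [hc]
        have : ((greedyU q x m : ℝ) - 1) / q ^ (m + 1)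
            = (greedyU q x m : ℝ) / q ^ (m + 1) - 1 / q ^ (m + 1) := by ring
        rw [this]
        linarith
    refine ⟨hdigits, hqm, ?_⟩
    have hqsum : qgSumU q x (m + 1) = x - 1 / q ^ (m + 1) := by
      rw [QGU.qgSumU_succ, hsm, hqm]
      have hc : ((greedyU q x m - 1 : ℕ) : ℝ) = (greedyU q x m : ℝ) - 1 := by
        push_cast [hbm]; ring
      rw [hc]
      have : ((greedyU q x m : ℝ) - 1) / q ^ (m + 1)
          = (greedyU q x m : ℝ) / q ^ (m + 1) - 1 / q ^ (m + 1) := by ring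
      rw [this]
      linarith
    exact fun i => (QGU.tail hq hqsum i).2
  · intro hinf
    have hallt : ∀ n, gSumU q x n < x := by
      intro n
      rcases lt_or_eq_of_le (QGU.gSum_le hq hx.le n) with h | h
      · exact h
      · exfalso
        obtain ⟨b, hb, hnb⟩ := hinf.exists_gt n
        have := (QGU.gSum_eq_of_eq hq h (b - n)).2
        rw [show n + (b - n) = b by omega] at this
        exact hb this
    have H : ∀ n, qgSumU q x n = gSumU q x n := by
      intro n
      induction n with
      | zero => rfl
      | succ n ih => exact (QGU.step_eq hq hx ih (hallt (n + 1))).2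
    funext n
    exact (QGU.step_eq hq hx (H n) (hallt (n + 1))).1
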